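/- Let A be the 3×3 coloring matrix with rows (0,0,0), (1,0,0), (0,1,0). For n ≥ 2, the number of A-colored plane trees with n vertices and root color 3 is 2^{n-2}, and the total count t_A(n) = 2^{n-2} + 1. -/

import Mathlib

inductive CTree (α : Type) : Type
  | node : α → List (CTree α) → CTree α

namespace CTree

def color {α : Type} : CTree α → α
  | node c _ => c

def children {α : Type} : CTree α → List (CTree α)
  | node _ ts => ts

def size {α : Type} : CTree α → ℕ
  | node _ ts => 1 + (ts.attach.map fun t => size t.1).sum
decreasing_by
  have := List.sizeOf_lt_of_mem t.2
  simp only [CTree.node.sizeOf_spec]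
  omega

def Valid {α : Type} (A : Matrix α α ℕ) : CTree α → Prop
  | node c ts => ∀ t ∈ ts, A c t.color = 1 ∧ Valid A t

end CTree

/-- Number of `A`-colored plane trees with `n` vertices and root color `i`. -/
noncomputable def colorCount {m : ℕ} (A : Matrix (Fin m) (Fin m) ℕ) (i : Fin m) (n : ℕ) : ℕ :=
  {t : CTree (Fin m) | t.Valid A ∧ t.size = n ∧ t.color = i}.ncard

/-- Total number of `A`-colored plane trees with `n` vertices. -/
noncomputable def totalCount {α : Type} (A : Matrix α α ℕ) (n : ℕ) : ℕ :=
  {t : CTree α | t.Valid A ∧ t.size = n}.ncard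

namespace Stmt11Aux

notation "A3" => (!![0, 0, 0; 1, 0, 0; 0, 1, 0] : Matrix (Fin 3) (Fin 3) ℕ)

theorem size_node {α : Type} (c : α) (ts : List (CTree α)) :
    (CTree.node c ts).size = 1 + (ts.map CTree.size).sum := by
  rw [CTree.size]
  congr 1
  simp [List.attach_map_val]

theorem valid_node {α : Type} (A : Matrix α α ℕ) (c : α) (ts : List (CTree α)) :
    (CTree.node c ts).Valid A ↔ ∀ t ∈ ts, A c t.color = 1 ∧ t.Valid A := by
  rw [CTree.Valid]

def leaf3 : CTree (Fin 3) := .node 0 []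
def star3 (k : ℕ) : CTree (Fin 3) := .node 1 (List.replicate k leaf3)
def comp3 (L : List ℕ) : CTree (Fin 3) := .node 2 (L.map fun b => star3 (b - 1))

theorem leaf3_valid : leaf3.Valid A3 := by
  rw [leaf3, valid_node]; simp

theorem leaf3_size : leaf3.size = 1 := by rw [leaf3, size_node]; simp

theorem star3_valid (k : ℕ) : (star3 k).Valid A3 := by
  rw [star3, valid_node]
  intro t ht
  rw [List.eq_of_mem_replicate ht]
  exact ⟨by decide, leaf3_valid⟩

theorem star3_size (k : ℕ) : (star3 k).size = k + 1 := by
  rw [star3, size_node]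
  have : (List.replicate k leaf3).map CTree.size = List.replicate k 1 := by
    rw [List.map_replicate, leaf3_size]
  rw [this]
  simp [Nat.add_comm]

theorem star3_color (k : ℕ) : (star3 k).color = 1 := rfl

theorem comp3_valid (L : List ℕ) : (comp3 L).Valid A3 := by
  rw [comp3, valid_node]
  intro t ht
  obtain ⟨b, _, rfl⟩ := List.mem_map.1 ht
  exact ⟨by rw [star3_color]; decide, star3_valid _⟩

theorem comp3_size (L : List ℕ) (hL : ∀ b ∈ L, 1 ≤ b) : (comp3 L).size = 1 + L.sum := by
  rw [comp3, size_node]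
  congr 1
  rw [List.map_map]
  have : L.map (CTree.size ∘ fun b => star3 (b - 1)) = L.map id := by
    apply List.map_congr_left
    intro b hb
    have := hL b hb
    simp only [Function.comp_apply, star3_size, id_eq]
    omega
  rw [this, List.map_id]

theorem comp3_color (L : List ℕ) : (comp3 L).color = 2 := rfl

theorem fin3_cases (i : Fin 3) : i = 0 ∨ i = 1 ∨ i = 2 := by
  fin_cases i <;> simp

/-- A valid tree of color 0 is a leaf. -/
theorem eq_leaf3 (t : CTree (Fin 3)) (hv : t.Valid A3) (hc : t.color = 0) : t = leaf3 := by
  obtain ⟨c, ts⟩ := t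
  rw [CTree.color] at hc
  subst hc
  rw [valid_node] at hv
  have : ts = [] := by
    rcases ts with _ | ⟨t, ts⟩
    · rfl
    · exfalso
      have h1 := (hv t (by simp)).1
      rcases fin3_cases t.color with h | h | h <;> rw [h] at h1 <;> exact absurd h1 (by decide)
  rw [this]; rfl

/-- A valid tree of color 1 is a star. -/
theorem eq_star3 (t : CTree (Fin 3)) (hv : t.Valid A3) (hc : t.color = 1) :
    t = star3 (t.size - 1) := by
  obtain ⟨c, ts⟩ := t
  rw [CTree.color] at hc
  subst hc
  rw [valid_node] at hv
  have hts : ∀ s ∈ ts, s = leaf3 := by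
    intro s hs
    obtain ⟨h1, h2⟩ := hv s hs
    apply eq_leaf3 s h2
    rcases fin3_cases s.color with h | h | h
    · exact h
    · rw [h] at h1; exact absurd h1 (by decide)
    · rw [h] at h1; exact absurd h1 (by decide)
  have hrep : ts = List.replicate ts.length leaf3 := List.eq_replicate_of_mem hts
  have hsize : (CTree.node (1 : Fin 3) ts).size = ts.length + 1 := by
    rw [size_node, hrep]
    simp [leaf3_size, Nat.add_comm]
  rw [hsize]
  simp only [Nat.add_sub_cancel]
  rw [star3, ← hrep]

/-- A valid tree of color 2 is `comp3` of a list of positive integers. -/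
theorem eq_comp3 (t : CTree (Fin 3)) (hv : t.Valid A3) (hc : t.color = 2) :
    ∃ L : List ℕ, (∀ b ∈ L, 1 ≤ b) ∧ t = comp3 L ∧ t.size = 1 + L.sum := by
  obtain ⟨c, ts⟩ := t
  rw [CTree.color] at hc
  subst hc
  rw [valid_node] at hv
  have hts : ∀ s ∈ ts, s = star3 (s.size - 1) ∧ 1 ≤ s.size := by
    intro s hs
    obtain ⟨h1, h2⟩ := hv s hs
    have hcol : s.color = 1 := by
      rcases fin3_cases s.color with h | h | h
      · rw [h] at h1; exact absurd h1 (by decide)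
      · exact h
      · rw [h] at h1; exact absurd h1 (by decide)
    have := eq_star3 s h2 hcol
    constructor
    · exact this
    · rcases s with ⟨c, us⟩
      rw [size_node]; omega
  refine ⟨ts.map CTree.size, ?_, ?_, ?_⟩
  · intro b hb
    obtain ⟨s, hs, rfl⟩ := List.mem_map.1 hb
    exact (hts s hs).2
  · rw [comp3, List.map_map]
    congr 1
    conv_lhs => rw [← List.map_id ts]
    apply List.map_congr_left
    intro s hs
    simpa [Function.comp] using (hts s hs).1
  · rw [size_node]

/-- The map from compositions of `n-1` to valid color-2 trees of size `n`. -/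
noncomputable def compEquiv (n : ℕ) (hn : 1 ≤ n) :
    Composition (n - 1) ≃ {t : CTree (Fin 3) | t.Valid A3 ∧ t.size = n ∧ t.color = 2} := by
  apply Equiv.ofBijective (fun c =>
    ⟨comp3 c.blocks, comp3_valid _, by
      rw [comp3_size _ (fun b hb => c.blocks_pos hb), c.blocks_sum]; omega,
      comp3_color _⟩)
  constructor
  · intro c₁ c₂ h
    simp only [Subtype.mk.injEq, comp3, CTree.node.injEq, true_and] at h
    have : c₁.blocks = c₂.blocks := by
      have h2 := congrArg (List.map CTree.size) h
      rw [List.map_map, List.map_map] at h2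
      have e1 : c₁.blocks.map (CTree.size ∘ fun b => star3 (b - 1)) = c₁.blocks := by
        conv_rhs => rw [← List.map_id c₁.blocks]
        apply List.map_congr_left
        intro b hb
        have := c₁.blocks_pos hb
        simp only [Function.comp_apply, star3_size, id_eq]
        omega
      have e2 : c₂.blocks.map (CTree.size ∘ fun b => star3 (b - 1)) = c₂.blocks := by
        conv_rhs => rw [← List.map_id c₂.blocks]
        apply List.map_congr_left
        intro b hb
        have := c₂.blocks_pos hb
        simp only [Function.comp_apply, star3_size, id_eq]
        omega
      rwa [e1, e2] at h2
    exact Composition.ext this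
  · rintro ⟨t, hv, hs, hc⟩
    obtain ⟨L, hpos, rfl, hsum⟩ := eq_comp3 t hv hc
    refine ⟨⟨L, fun hb => hpos _ hb, by omega⟩, rfl⟩

theorem colorCount_two (n : ℕ) (hn : 2 ≤ n) : colorCount A3 2 n = 2 ^ (n - 2) := by
  rw [colorCount, ← Nat.card_coe_set_eq,
    Nat.card_congr (compEquiv n (by omega)).symm, Nat.card_eq_fintype_card,
    composition_card]
  congr 1

theorem set_finite_two (n : ℕ) (hn : 1 ≤ n) :
    {t : CTree (Fin 3) | t.Valid A3 ∧ t.size = n ∧ t.color = 2}.Finite := by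
  rw [← Set.finite_coe_iff]
  exact Finite.of_equiv _ (compEquiv n hn)

theorem total (n : ℕ) (hn : 2 ≤ n) : totalCount A3 n = 2 ^ (n - 2) + 1 := by
  have hsplit : {t : CTree (Fin 3) | t.Valid A3 ∧ t.size = n} =
      {t : CTree (Fin 3) | t.Valid A3 ∧ t.size = n ∧ t.color = 2} ∪
      {t : CTree (Fin 3) | t.Valid A3 ∧ t.size = n ∧ t.color = 1} := by
    ext t
    simp only [Set.mem_setOf_eq, Set.mem_union]
    constructor
    · rintro ⟨hv, hs⟩
      rcases fin3_cases t.color with h | h | h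
      · exfalso
        have := eq_leaf3 t hv h
        rw [this, leaf3_size] at hs
        omega
      · exact Or.inr ⟨hv, hs, h⟩
      · exact Or.inl ⟨hv, hs, h⟩
    · rintro (⟨hv, hs, _⟩ | ⟨hv, hs, _⟩) <;> exact ⟨hv, hs⟩
  have hone : {t : CTree (Fin 3) | t.Valid A3 ∧ t.size = n ∧ t.color = 1} = {star3 (n - 1)} := by
    ext t
    simp only [Set.mem_setOf_eq, Set.mem_singleton_iff]
    constructor
    · rintro ⟨hv, hs, hc⟩
      rw [eq_star3 t hv hc, hs]
    · rintro rfl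
      exact ⟨star3_valid _, by rw [star3_size]; omega, star3_color _⟩
  have hdisj : Disjoint {t : CTree (Fin 3) | t.Valid A3 ∧ t.size = n ∧ t.color = 2}
      ({star3 (n - 1)} : Set (CTree (Fin 3))) := by
    rw [Set.disjoint_singleton_right]
    rintro ⟨_, _, hc⟩
    rw [star3_color] at hc
    exact absurd hc (by decide)
  rw [totalCount, hsplit, hone, Set.ncard_union_eq hdisj (set_finite_two n (by omega))
    (Set.finite_singleton _), Set.ncard_singleton, ← colorCount, colorCount_two n hn]

end Stmt11Aux

theorem stmt11 (n : ℕ) (hn : 2 ≤ n) :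
    colorCount (!![0, 0, 0; 1, 0, 0; 0, 1, 0] : Matrix (Fin 3) (Fin 3) ℕ) 2 n = 2 ^ (n - 2) ∧
    totalCount (!![0, 0, 0; 1, 0, 0; 0, 1, 0] : Matrix (Fin 3) (Fin 3) ℕ) n = 2 ^ (n - 2) + 1 := by
  exact ⟨Stmt11Aux.colorCount_two n hn, Stmt11Aux.total n hn⟩
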